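/- Let C(G_1, …, G_n) be the chain of pairwise disjoint connected graphs G_1, …, G_n with respect to vertices x_i, y_i ∈ V(G_i), obtained by identifying y_i with x_{i+1} for i = 1, …, n−1. Then Mo(C(G_1, …, G_n)) ≤ Σ_{i=1}^{n} Mo(G_i) + Σ_{i=1}^{n} |E(G_i)|·(|V(G)| − |V(G_i)|), where G = C(G_1, …, G_n). -/

import Mathlib

open Finset

section MostarDefs

variable {V : Type*}

/-- Number of vertices of `G` strictly closer to `u` than to `v`. -/
noncomputable def closerCount (G : SimpleGraph V) (u v : V) : ℕ :=
  Nat.card {w : V // G.dist w u < G.dist w v}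

/-- Contribution `|n_u - n_v|` of an edge, as a symmetric function on `Sym2 V`. -/
noncomputable def mostarTerm (G : SimpleGraph V) : Sym2 V → ℕ :=
  Sym2.lift ⟨fun u v => ((closerCount G u v : ℤ) - closerCount G v u).natAbs,
    fun u v => by dsimp only; omega⟩

/-- The Mostar index of a finite graph. -/
noncomputable def mostar (G : SimpleGraph V) [Finite V] : ℕ :=
  letI := Fintype.ofFinite V
  letI := Classical.decEq V
  letI := Classical.decRel G.Adj
  ∑ e ∈ G.edgeFinset, mostarTerm G e

/-- Distance from a vertex `w` to an edge, as min over the endpoints. -/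
noncomputable def vertexEdgeDist (G : SimpleGraph V) (w : V) : Sym2 V → ℕ :=
  Sym2.lift ⟨fun x y => min (G.dist x w) (G.dist y w), fun _ _ => min_comm _ _⟩

/-- Number of edges of `G` strictly closer to `u` than to `v`. -/
noncomputable def edgeCloserCount (G : SimpleGraph V) (u v : V) : ℕ :=
  Nat.card {e : Sym2 V // e ∈ G.edgeSet ∧ vertexEdgeDist G u e < vertexEdgeDist G v e}

/-- Contribution `|m_u - m_v|` of an edge, as a symmetric function on `Sym2 V`. -/
noncomputable def emostarTerm (G : SimpleGraph V) : Sym2 V → ℕ :=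
  Sym2.lift ⟨fun u v => ((edgeCloserCount G u v : ℤ) - edgeCloserCount G v u).natAbs,
    fun u v => by dsimp only; omega⟩

/-- The edge Mostar index of a finite graph. -/
noncomputable def emostar (G : SimpleGraph V) [Finite V] : ℕ :=
  letI := Fintype.ofFinite V
  letI := Classical.decEq V
  letI := Classical.decRel G.Adj
  ∑ e ∈ G.edgeFinset, emostarTerm G e

end MostarDefs

/-- The chain `C(G 0, …, G (n-1))` of the graphs `G i` with respect to the vertices
`x i, y i`, obtained by identifying `y i` with `x (i+1)`.  The identified vertex is
represented at level `i` (as `y i`), so that level `i ≥ 1` omits `x i`. -/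
def chainGraph (n : ℕ) (V : ℕ → Type*) (G : ∀ i, SimpleGraph (V i)) (x y : ∀ i, V i) :
    SimpleGraph ((i : Fin n) × {v : V i.val // i.val = 0 ∨ v ≠ x i.val}) where
  Adj p q :=
    (∃ (i : Fin n) (a b : {v : V i.val // i.val = 0 ∨ v ≠ x i.val}),
      (G i.val).Adj a.1 b.1 ∧ p = ⟨i, a⟩ ∧ q = ⟨i, b⟩) ∨
    (∃ (i j : Fin n) (a : {v : V i.val // i.val = 0 ∨ v ≠ x i.val})
      (b : {v : V j.val // j.val = 0 ∨ v ≠ x j.val}),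
      j.val = i.val + 1 ∧ a.1 = y i.val ∧ (G j.val).Adj (x j.val) b.1 ∧
      ((p = ⟨i, a⟩ ∧ q = ⟨j, b⟩) ∨ (p = ⟨j, b⟩ ∧ q = ⟨i, a⟩)))
  symm := by
    constructor
    rintro p q (⟨i, a, b, h, rfl, rfl⟩ | ⟨i, j, a, b, hj, ha, hb, (⟨rfl, rfl⟩ | ⟨rfl, rfl⟩)⟩)
    · exact Or.inl ⟨i, b, a, h.symm, rfl, rfl⟩
    · exact Or.inr ⟨i, j, a, b, hj, ha, hb, Or.inr ⟨rfl, rfl⟩⟩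
    · exact Or.inr ⟨i, j, a, b, hj, ha, hb, Or.inl ⟨rfl, rfl⟩⟩
  loopless := by
    constructor
    rintro p (⟨i, a, b, h, rfl, hab⟩ |
      ⟨i, j, a, b, hj, ha, hb, (⟨rfl, hab⟩ | ⟨rfl, hab⟩)⟩)
    · obtain rfl : a = b := by simpa using hab
      exact (G i.val).irrefl h
    · have : i = j := congrArg Sigma.fst hab
      omega
    · have : j = i := congrArg Sigma.fst hab
      omega

section Aux

/-- Map a walk along a "reflexive homomorphism": each edge maps to an edge or collapses. -/
lemma exists_walk_length_le {α β : Type*} {A : SimpleGraph α} {B : SimpleGraph β} (f : α → β)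
    (hf : ∀ ⦃u v⦄, A.Adj u v → B.Adj (f u) (f v) ∨ f u = f v) {u v : α} (w : A.Walk u v) :
    ∃ w' : B.Walk (f u) (f v), w'.length ≤ w.length := by
  induction w with
  | nil => exact ⟨.nil, le_rfl⟩
  | @cons a b c h p ih =>
    obtain ⟨w', hw'⟩ := ih
    rcases hf h with h' | h'
    · exact ⟨.cons h' w', by simpa using Nat.succ_le_succ hw'⟩
    · exact ⟨w'.copy h'.symm rfl, by rw [SimpleGraph.Walk.length_copy]; exact hw'.trans (by simp)⟩

lemma dist_le_of_reflHom {α β : Type*} {A : SimpleGraph α} {B : SimpleGraph β} (f : α → β)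
    (hf : ∀ ⦃u v⦄, A.Adj u v → B.Adj (f u) (f v) ∨ f u = f v) {u v : α}
    (hr : A.Reachable u v) : B.dist (f u) (f v) ≤ A.dist u v := by
  obtain ⟨p, hp⟩ := hr.exists_walk_length_eq_dist
  obtain ⟨p', hp'⟩ := exists_walk_length_le f hf p
  exact le_trans (SimpleGraph.dist_le p') (hp ▸ hp')

/-- Splitting a subtype count along a set. -/
lemma natCard_subtype_split {W : Type*} [Finite W] (S : Set W) (P : W → Prop) :
    Nat.card {w : W // P w} =
      Nat.card {w : W // w ∈ S ∧ P w} + Nat.card {w : W // w ∉ S ∧ P w} := by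
  classical
  letI : Fintype W := Fintype.ofFinite W
  simp only [Nat.card_eq_fintype_card, Fintype.card_subtype]
  rw [← Finset.card_filter_add_card_filter_not (s := Finset.univ.filter P)
    (p := fun w => w ∈ S), Finset.filter_filter, Finset.filter_filter]
  congr 1 <;> · congr 1; ext w; simp [and_comm]

lemma natCard_subtype_mono {W : Type*} [Finite W] {P Q : W → Prop} (h : ∀ w, P w → Q w) :
    Nat.card {w : W // P w} ≤ Nat.card {w : W // Q w} := by
  classical
  letI : Fintype W := Fintype.ofFinite W
  simp only [Nat.card_eq_fintype_card]
  exact Fintype.card_subtype_mono _ _ h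

lemma natCard_not_mem_range {α W : Type*} [Finite W] (f : α → W) (hf : Function.Injective f) :
    Nat.card {w : W // w ∉ Set.range f} = Nat.card W - Nat.card α := by
  classical
  letI : Fintype W := Fintype.ofFinite W
  simp only [Nat.card_eq_fintype_card]
  rw [Fintype.card_subtype_compl]
  congr 1
  rw [← Nat.card_eq_fintype_card]
  exact Nat.card_range_of_injective hf

end Aux
section Chain

variable {n : ℕ} {V : ℕ → Type*} {G : ∀ i, SimpleGraph (V i)} {x y : ∀ i, V i}

/-- The canonical inclusion of `V i` into the chain's vertex type. -/
noncomputable def chainEmb (x y : ∀ i, V i) (hxy : ∀ i < n, x i ≠ y i) (i : Fin n)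
    (v : V i.val) : (j : Fin n) × {v : V j.val // j.val = 0 ∨ v ≠ x j.val} :=
  letI := Classical.propDecidable (i.val ≠ 0 ∧ v = x i.val)
  if h : i.val ≠ 0 ∧ v = x i.val then
    ⟨⟨i.val - 1, by have := i.isLt; omega⟩,
      ⟨y (i.val - 1), Or.inr (Ne.symm (hxy _ (by have := i.isLt; omega)))⟩⟩
  else ⟨i, ⟨v, by tauto⟩⟩

lemma chainEmb_of_ne (hxy : ∀ i < n, x i ≠ y i) (i : Fin n) {v : V i.val}
    (h : i.val = 0 ∨ v ≠ x i.val) : chainEmb x y hxy i v = ⟨i, ⟨v, h⟩⟩ := by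
  rw [chainEmb, dif_neg (by tauto)]

lemma chainEmb_x (hxy : ∀ i < n, x i ≠ y i) (i : Fin n) (h0 : i.val ≠ 0) (j : Fin n)
    (hj : j.val + 1 = i.val) (w : {v : V j.val // j.val = 0 ∨ v ≠ x j.val})
    (hw : w.1 = y j.val) : chainEmb x y hxy i (x i.val) = ⟨j, w⟩ := by
  rw [chainEmb, dif_pos ⟨h0, rfl⟩]
  obtain ⟨jv, hjv⟩ := j
  simp only at hj hw
  obtain rfl : jv = i.val - 1 := by omega
  exact congrArg _ (Subtype.ext hw.symm)

/-- Retraction of the chain's vertex type onto `V i`. -/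
def chainRetr (x y : ∀ i, V i) (i : Fin n)
    (p : (j : Fin n) × {v : V j.val // j.val = 0 ∨ v ≠ x j.val}) : V i.val :=
  if p.1.val < i.val then x i.val
  else if h : p.1.val = i.val then cast (congrArg V h) p.2.1
  else y i.val

lemma chainRetr_lt {i : Fin n} {p : (j : Fin n) × {v : V j.val // j.val = 0 ∨ v ≠ x j.val}}
    (h : p.1.val < i.val) : chainRetr x y i p = x i.val := by
  rw [chainRetr, if_pos h]

lemma chainRetr_eq {i : Fin n} (v : {v : V i.val // i.val = 0 ∨ v ≠ x i.val}) :
    chainRetr x y i ⟨i, v⟩ = v.1 := by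
  rw [chainRetr, if_neg (lt_irrefl _), dif_pos rfl]
  exact eq_of_heq (cast_heq _ _)

lemma chainRetr_gt {i : Fin n} {p : (j : Fin n) × {v : V j.val // j.val = 0 ∨ v ≠ x j.val}}
    (h : i.val < p.1.val) : chainRetr x y i p = y i.val := by
  rw [chainRetr, if_neg (by omega), dif_neg (by omega)]

lemma chainRetr_chainEmb (hxy : ∀ i < n, x i ≠ y i) (i : Fin n) (v : V i.val) :
    chainRetr x y i (chainEmb x y hxy i v) = v := by
  by_cases h : i.val ≠ 0 ∧ v = x i.val
  · rw [chainEmb, dif_pos h, chainRetr_lt (by simp; omega)]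
    exact h.2.symm
  · rw [chainEmb, dif_neg h, chainRetr_eq]

lemma chainEmb_inj (hxy : ∀ i < n, x i ≠ y i) (i : Fin n) :
    Function.Injective (chainEmb x y hxy i) := by
  intro a b hab
  have := chainRetr_chainEmb hxy i a
  rw [hab, chainRetr_chainEmb] at this
  exact this.symm

end Chain
section Chain2

variable {n : ℕ} {V : ℕ → Type*} {G : ∀ i, SimpleGraph (V i)} {x y : ∀ i, V i}

lemma chainEmb_adj (hxy : ∀ i < n, x i ≠ y i) (i : Fin n) {a b : V i.val}
    (hab : (G i.val).Adj a b) :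
    (chainGraph n V G x y).Adj (chainEmb x y hxy i a) (chainEmb x y hxy i b) := by
  have hne := hab.ne
  have key : ∀ (a b : V i.val), (G i.val).Adj a b → (i.val ≠ 0 ∧ a = x i.val) →
      (chainGraph n V G x y).Adj (chainEmb x y hxy i a) (chainEmb x y hxy i b) := by
    intro a b hab ha
    have hne := hab.ne
    have hb : i.val = 0 ∨ b ≠ x i.val := Or.inr (fun hbx => hne (ha.2.trans hbx.symm))
    rw [chainEmb, dif_pos ha, chainEmb_of_ne hxy i hb]
    right
    refine ⟨⟨i.val - 1, by have := i.isLt; omega⟩, i,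
      ⟨y (i.val - 1), Or.inr (Ne.symm (hxy _ (by have := i.isLt; omega)))⟩, ⟨b, hb⟩,
      ?_, rfl, ?_, Or.inl ⟨rfl, rfl⟩⟩
    · show i.val = i.val - 1 + 1
      have := ha.1; omega
    · rw [ha.2] at hab; exact hab
  by_cases ha : i.val ≠ 0 ∧ a = x i.val
  · exact key a b hab ha
  · by_cases hb : i.val ≠ 0 ∧ b = x i.val
    · exact (key b a hab.symm hb).symm
    · rw [chainEmb_of_ne hxy i (by tauto), chainEmb_of_ne hxy i (by tauto)]
      exact Or.inl ⟨i, _, _, hab, rfl, rfl⟩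

lemma chainRetr_adj (i : Fin n) {p q : (j : Fin n) × {v : V j.val // j.val = 0 ∨ v ≠ x j.val}}
    (h : (chainGraph n V G x y).Adj p q) :
    (G i.val).Adj (chainRetr x y i p) (chainRetr x y i q) ∨
      chainRetr x y i p = chainRetr x y i q := by
  have main : ∀ (j k : Fin n) (a : {v : V j.val // j.val = 0 ∨ v ≠ x j.val})
      (b : {v : V k.val // k.val = 0 ∨ v ≠ x k.val}), k.val = j.val + 1 → a.1 = y j.val →
      (G k.val).Adj (x k.val) b.1 →
      (G i.val).Adj (chainRetr x y i ⟨j, a⟩) (chainRetr x y i ⟨k, b⟩) ∨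
        chainRetr x y i ⟨j, a⟩ = chainRetr x y i ⟨k, b⟩ := by
    intro j k a b hk ha hb
    rcases Nat.lt_trichotomy k.val i.val with hk2 | hk2 | hk2
    · right; rw [chainRetr_lt (show j.val < i.val by omega), chainRetr_lt hk2]
    · left
      rw [chainRetr_lt (show j.val < i.val by omega)]
      obtain rfl : k = i := Fin.ext hk2
      rw [chainRetr_eq]
      exact hb
    · rcases Nat.lt_trichotomy j.val i.val with hj | hj | hj
      · exact (by omega : False).elim
      · right
        obtain rfl : j = i := Fin.ext hj
        rw [chainRetr_eq, chainRetr_gt hk2]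
        exact ha
      · right; rw [chainRetr_gt hj, chainRetr_gt hk2]
  rcases h with ⟨j, a, b, hab, rfl, rfl⟩ | ⟨j, k, a, b, hk, ha, hb, (⟨rfl, rfl⟩ | ⟨rfl, rfl⟩)⟩
  · rcases Nat.lt_trichotomy j.val i.val with hj | hj | hj
    · right; rw [chainRetr_lt hj, chainRetr_lt hj]
    · obtain rfl : j = i := Fin.ext hj
      left; rw [chainRetr_eq, chainRetr_eq]; exact hab
    · right; rw [chainRetr_gt hj, chainRetr_gt hj]
  · exact main j k a b hk ha hb
  · rcases main j k a b hk ha hb with h' | h'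
    · exact Or.inl h'.symm
    · exact Or.inr h'.symm

end Chain2
section Chain3

variable {n : ℕ} {V : ℕ → Type*} {G : ∀ i, SimpleGraph (V i)} {x y : ∀ i, V i}

lemma chainEmb_dist (hconn : ∀ i < n, (G i).Connected) (hxy : ∀ i < n, x i ≠ y i)
    (i : Fin n) (u v : V i.val) :
    (chainGraph n V G x y).dist (chainEmb x y hxy i u) (chainEmb x y hxy i v) =
      (G i.val).dist u v := by
  have hr : (G i.val).Reachable u v := (hconn i.val i.isLt).preconnected u v
  refine le_antisymm
    (dist_le_of_reflHom _ (fun u v h => Or.inl (chainEmb_adj hxy i h)) hr) ?_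
  have hrC : (chainGraph n V G x y).Reachable (chainEmb x y hxy i u) (chainEmb x y hxy i v) :=
    hr.map ⟨chainEmb x y hxy i, fun h => chainEmb_adj hxy i h⟩
  have := dist_le_of_reflHom (chainRetr x y i) (fun p q h => chainRetr_adj i h) hrC
  rwa [chainRetr_chainEmb, chainRetr_chainEmb] at this

lemma closerCount_chainEmb [∀ i, Finite (V i)] (hconn : ∀ i < n, (G i).Connected)
    (hxy : ∀ i < n, x i ≠ y i) (i : Fin n) (u v : V i.val) :
    Nat.card {p : (j : Fin n) × {v : V j.val // j.val = 0 ∨ v ≠ x j.val} //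
        p ∈ Set.range (chainEmb x y hxy i) ∧
        (chainGraph n V G x y).dist p (chainEmb x y hxy i u) <
          (chainGraph n V G x y).dist p (chainEmb x y hxy i v)} =
      closerCount (G i.val) u v := by
  rw [closerCount]
  refine (Nat.card_congr (Equiv.ofBijective
    (fun w => ⟨chainEmb x y hxy i w.1, ⟨w.1, rfl⟩, by
      rw [chainEmb_dist hconn hxy, chainEmb_dist hconn hxy]; exact w.2⟩) ⟨?_, ?_⟩)).symm
  · intro w w' hww
    exact Subtype.ext (chainEmb_inj hxy i (congrArg Subtype.val hww))
  · rintro ⟨p, ⟨w, rfl⟩, hlt⟩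
    refine ⟨⟨w, ?_⟩, rfl⟩
    rwa [chainEmb_dist hconn hxy, chainEmb_dist hconn hxy] at hlt

lemma mostarTerm_chainEmb_le [∀ i, Finite (V i)] (hconn : ∀ i < n, (G i).Connected)
    (hxy : ∀ i < n, x i ≠ y i) (i : Fin n) {a b : V i.val} (hab : (G i.val).Adj a b) :
    mostarTerm (chainGraph n V G x y) s(chainEmb x y hxy i a, chainEmb x y hxy i b) ≤
      mostarTerm (G i.val) s(a, b) +
        (Nat.card ((j : Fin n) × {v : V j.val // j.val = 0 ∨ v ≠ x j.val}) -
          Nat.card (V i.val)) := by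
  set C := chainGraph n V G x y
  set e := chainEmb x y hxy i
  set M := Nat.card ((j : Fin n) × {v : V j.val // j.val = 0 ∨ v ≠ x j.val}) -
    Nat.card (V i.val) with hM
  have split : ∀ u v : V i.val, closerCount C (e u) (e v) =
      closerCount (G i.val) u v +
        Nat.card {p // p ∉ Set.range e ∧ C.dist p (e u) < C.dist p (e v)} := by
    intro u v
    rw [closerCount, natCard_subtype_split (Set.range e)
      (fun p => C.dist p (e u) < C.dist p (e v)), closerCount_chainEmb hconn hxy]
  have bnd : ∀ u v : V i.val,
      Nat.card {p // p ∉ Set.range e ∧ C.dist p (e u) < C.dist p (e v)} ≤ M := by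
    intro u v
    refine le_trans (natCard_subtype_mono fun p hp => hp.1) ?_
    rw [hM, natCard_not_mem_range e (chainEmb_inj hxy i)]
  have h1 := split a b
  have h2 := split b a
  have h3 := bnd a b
  have h4 := bnd b a
  simp only [mostarTerm, Sym2.lift_mk]
  omega

end Chain3
section Chain4

variable {n : ℕ} {V : ℕ → Type*} {G : ∀ i, SimpleGraph (V i)} {x y : ∀ i, V i}

lemma chainEmb_map_mem (hxy : ∀ i < n, x i ≠ y i) (i : Fin n) {e : Sym2 (V i.val)}
    (he : e ∈ (G i.val).edgeSet) :
    Sym2.map (chainEmb x y hxy i) e ∈ (chainGraph n V G x y).edgeSet := by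
  induction e with
  | _ a b =>
    rw [Sym2.map_pair_eq, SimpleGraph.mem_edgeSet]
    exact chainEmb_adj hxy i ((SimpleGraph.mem_edgeSet _).mp he)

/-- The level of an edge of the chain: maximum of the levels of its endpoints. -/
def edgeLvl (x : ∀ i, V i) :
    Sym2 ((j : Fin n) × {v : V j.val // j.val = 0 ∨ v ≠ x j.val}) → ℕ :=
  Sym2.lift ⟨fun p q => max p.1.val q.1.val, fun p q => max_comm _ _⟩

lemma edgeLvl_map (hxy : ∀ i < n, x i ≠ y i) (i : Fin n) {e : Sym2 (V i.val)}
    (he : e ∈ (G i.val).edgeSet) :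
    edgeLvl x (Sym2.map (chainEmb x y hxy i) e) = i.val := by
  induction e with
  | _ a b =>
    have hne : a ≠ b := ((SimpleGraph.mem_edgeSet _).mp he).ne
    rw [Sym2.map_pair_eq]
    by_cases ha : i.val ≠ 0 ∧ a = x i.val
    · have hb : i.val = 0 ∨ b ≠ x i.val := Or.inr (fun hbx => hne (ha.2.trans hbx.symm))
      rw [chainEmb, dif_pos ha, chainEmb_of_ne hxy i hb, edgeLvl, Sym2.lift_mk]
      simp only
      omega
    · by_cases hb : i.val ≠ 0 ∧ b = x i.val
      · rw [chainEmb_of_ne hxy i (by tauto), chainEmb, dif_pos hb, edgeLvl, Sym2.lift_mk]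
        simp only
        omega
      · rw [chainEmb_of_ne hxy i (by tauto), chainEmb_of_ne hxy i (by tauto), edgeLvl,
          Sym2.lift_mk]
        simp

/-- The bijection between the disjoint union of the edge sets and the chain's edge set. -/
noncomputable def chainEdgeMap (G : ∀ i, SimpleGraph (V i)) (hxy : ∀ i < n, x i ≠ y i)
    (p : Σ i : Fin n, ↥(G i.val).edgeSet) : ↥(chainGraph n V G x y).edgeSet :=
  ⟨Sym2.map (chainEmb x y hxy p.1) p.2.1, chainEmb_map_mem hxy p.1 p.2.2⟩

lemma chainEdgeMap_bijective (hxy : ∀ i < n, x i ≠ y i) :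
    Function.Bijective (chainEdgeMap G hxy) := by
  constructor
  · rintro ⟨i, e⟩ ⟨j, f⟩ h
    have h' : Sym2.map (chainEmb x y hxy i) e.1 = Sym2.map (chainEmb x y hxy j) f.1 :=
      congrArg Subtype.val h
    obtain rfl : i = j := by
      refine Fin.ext ?_
      rw [← edgeLvl_map hxy i e.2, ← edgeLvl_map hxy j f.2, h']
    have := Sym2.map.injective (chainEmb_inj hxy i) h'
    exact congrArg _ (Subtype.ext this)
  · rintro ⟨e, he⟩
    induction e with
    | _ p q =>
      rw [SimpleGraph.mem_edgeSet] at he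
      rcases he with ⟨i, a, b, hab, rfl, rfl⟩ |
        ⟨i, j, a, b, hj, ha, hb, (⟨rfl, rfl⟩ | ⟨rfl, rfl⟩)⟩
      · refine ⟨⟨i, ⟨s(a.1, b.1), hab⟩⟩, ?_⟩
        apply Subtype.ext
        show Sym2.map _ s(a.1, b.1) = _
        have h1 : chainEmb x y hxy i a.1 = ⟨i, a⟩ := chainEmb_of_ne hxy i a.2
        have h2 : chainEmb x y hxy i b.1 = ⟨i, b⟩ := chainEmb_of_ne hxy i b.2
        rw [Sym2.map_pair_eq, h1, h2]
      · refine ⟨⟨j, ⟨s(x j.val, b.1), hb⟩⟩, ?_⟩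
        apply Subtype.ext
        show Sym2.map _ s(x j.val, b.1) = _
        have h1 : chainEmb x y hxy j (x j.val) = ⟨i, a⟩ :=
          chainEmb_x hxy j (by omega) i (by omega) a ha
        have h2 : chainEmb x y hxy j b.1 = ⟨j, b⟩ := chainEmb_of_ne hxy j b.2
        rw [Sym2.map_pair_eq, h1, h2]
      · refine ⟨⟨j, ⟨s(x j.val, b.1), hb⟩⟩, ?_⟩
        apply Subtype.ext
        show Sym2.map _ s(x j.val, b.1) = _
        have h1 : chainEmb x y hxy j (x j.val) = ⟨i, a⟩ :=
          chainEmb_x hxy j (by omega) i (by omega) a ha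
        have h2 : chainEmb x y hxy j b.1 = ⟨j, b⟩ := chainEmb_of_ne hxy j b.2
        rw [Sym2.map_pair_eq, h1, h2]
        exact Sym2.eq_swap

end Chain4
lemma mostar_eq_sum {α : Type*} [Finite α] (H : SimpleGraph α) [Fintype H.edgeSet] :
    mostar H = ∑ e : ↥H.edgeSet, mostarTerm H e.1 := by
  unfold mostar
  rw [Finset.sum_set_coe]
  refine Finset.sum_congr ?_ (fun _ _ => rfl)
  ext e
  simp [SimpleGraph.mem_edgeFinset, Set.mem_toFinset]

theorem mostar_chainGraph_le' (n : ℕ) (hn : 1 ≤ n) (V : ℕ → Type*) [∀ i, Finite (V i)]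
    (G : ∀ i, SimpleGraph (V i)) (hconn : ∀ i < n, (G i).Connected) (x y : ∀ i, V i)
    (hxy : ∀ i < n, x i ≠ y i) :
    mostar (chainGraph n V G x y) ≤
      (∑ i ∈ Finset.range n, mostar (G i)) +
      ∑ i ∈ Finset.range n, Nat.card (G i).edgeSet *
        (Nat.card ((i : Fin n) × {v : V i.val // i.val = 0 ∨ v ≠ x i.val}) - Nat.card (V i)) := by
  classical
  letI : Fintype ((i : Fin n) × {v : V i.val // i.val = 0 ∨ v ≠ x i.val}) := Fintype.ofFinite _
  letI : ∀ i : Fin n, Fintype ↥(G i.val).edgeSet := fun i => Fintype.ofFinite _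
  letI : Fintype ↥(chainGraph n V G x y).edgeSet := Fintype.ofFinite _
  set N := Nat.card ((i : Fin n) × {v : V i.val // i.val = 0 ∨ v ≠ x i.val}) with hN
  have key : ∀ (i : Fin n) (e : ↥(G i.val).edgeSet),
      mostarTerm (chainGraph n V G x y) (chainEdgeMap G hxy ⟨i, e⟩).1 ≤
        mostarTerm (G i.val) e.1 + (N - Nat.card (V i.val)) := by
    rintro i ⟨e, he⟩
    induction e with
    | _ a b =>
      have hab := (SimpleGraph.mem_edgeSet _).mp he
      show mostarTerm _ (Sym2.map (chainEmb x y hxy i) s(a, b)) ≤ _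
      rw [Sym2.map_pair_eq]
      exact mostarTerm_chainEmb_le hconn hxy i hab
  calc mostar (chainGraph n V G x y)
      = ∑ e : ↥(chainGraph n V G x y).edgeSet, mostarTerm (chainGraph n V G x y) e.1 :=
        mostar_eq_sum _
    _ = ∑ p : (Σ i : Fin n, ↥(G i.val).edgeSet),
          mostarTerm (chainGraph n V G x y) (chainEdgeMap G hxy p).1 :=
        (Fintype.sum_bijective _ (chainEdgeMap_bijective hxy) _ _ (fun p => rfl)).symm
    _ = ∑ i : Fin n, ∑ e : ↥(G i.val).edgeSet,
          mostarTerm (chainGraph n V G x y) (chainEdgeMap G hxy ⟨i, e⟩).1 := by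
        rw [← Finset.univ_sigma_univ, Finset.sum_sigma]
    _ ≤ ∑ i : Fin n, ∑ e : ↥(G i.val).edgeSet,
          (mostarTerm (G i.val) e.1 + (N - Nat.card (V i.val))) :=
        Finset.sum_le_sum fun i _ => Finset.sum_le_sum fun e _ => key i e
    _ = ∑ i : Fin n,
          (mostar (G i.val) + Nat.card (G i.val).edgeSet * (N - Nat.card (V i.val))) := by
        refine Finset.sum_congr rfl fun i _ => ?_
        rw [Finset.sum_add_distrib, Finset.sum_const, ← mostar_eq_sum (G i.val),
          Finset.card_univ, smul_eq_mul, Nat.card_eq_fintype_card (α := ↥(G i.val).edgeSet)]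
    _ = (∑ i ∈ Finset.range n, mostar (G i)) +
        ∑ i ∈ Finset.range n, Nat.card (G i).edgeSet * (N - Nat.card (V i)) := by
        rw [Finset.sum_add_distrib,
          Fin.sum_univ_eq_sum_range (fun k => mostar (G k)) n,
          Fin.sum_univ_eq_sum_range
            (fun k => Nat.card (G k).edgeSet * (N - Nat.card (V k))) n]
theorem mostar_chainGraph_le (n : ℕ) (hn : 1 ≤ n) (V : ℕ → Type*) [∀ i, Finite (V i)]
    (G : ∀ i, SimpleGraph (V i)) (hconn : ∀ i < n, (G i).Connected) (x y : ∀ i, V i)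
    (hxy : ∀ i < n, x i ≠ y i) :
    mostar (chainGraph n V G x y) ≤
      (∑ i ∈ range n, mostar (G i)) +
      ∑ i ∈ range n, Nat.card (G i).edgeSet *
        (Nat.card ((i : Fin n) × {v : V i.val // i.val = 0 ∨ v ≠ x i.val}) - Nat.card (V i)) := by
  exact mostar_chainGraph_le' n hn V G hconn x y hxy
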